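/- Let 𝓕 be a family of ℓ-element subsets of F_q^n (q a prime power), with ℓ a fixed positive integer, and suppose there exist integer constants b > 0 and c ≥ 0 such that |𝓕| = Θ(q^{bn−c}). Assume that for every set S of k distinct points of F_q^n, the number of elements of 𝓕 containing S is O(q^{(b−k)n−c}) if 1 ≤ k ≤ b−1, and O(1) otherwise. Then, as q + n → ∞, the event Γ that the random subset X of F_q^n contains an element of 𝓕 has threshold function q^{(c−bn)/ℓ}. -/

import Mathlib

open Filter Asymptotics

noncomputable def prRandomSubset {α : Type*} (U : Finset α) (θ : ℝ)
    (E : Finset α → Prop) : ℝ :=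
  ∑ A ∈ U.powerset,
    @ite ℝ (E A) (Classical.propDecidable _)
      (θ ^ A.card * (1 - θ) ^ (U.card - A.card)) 0

set_option linter.unusedSectionVars false
open Finset

noncomputable def ind (p : Prop) : ℝ := @ite ℝ p (Classical.propDecidable p) 1 0

lemma ind_nonneg (p : Prop) : 0 ≤ ind p := by
  unfold ind; split <;> norm_num

lemma ind_le_one (p : Prop) : ind p ≤ 1 := by
  unfold ind; split <;> norm_num

lemma ind_true {p : Prop} (h : p) : ind p = 1 := by unfold ind; split <;> tauto

lemma ind_false {p : Prop} (h : ¬ p) : ind p = 0 := by unfold ind; split <;> tauto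

lemma ind_mul_ind (p r : Prop) : ind p * ind r = ind (p ∧ r) := by
  unfold ind
  rcases Classical.em p with h | h <;> rcases Classical.em r with h' | h' <;>
    simp [h, h']

section Prob
variable {α : Type*} [DecidableEq α] [Fintype α]

noncomputable def wt (θ : ℝ) (A : Finset α) : ℝ :=
  θ ^ A.card * (1 - θ) ^ (Fintype.card α - A.card)

lemma wt_nonneg {θ : ℝ} (h0 : 0 ≤ θ) (h1 : θ ≤ 1) (A : Finset α) : 0 ≤ wt θ A :=
  mul_nonneg (pow_nonneg h0 _) (pow_nonneg (by linarith) _)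

lemma sum_pow_powerset (θ : ℝ) (s : Finset α) :
    ∑ B ∈ s.powerset, θ ^ B.card * (1 - θ) ^ (s.card - B.card) = 1 := by
  calc ∑ B ∈ s.powerset, θ ^ B.card * (1 - θ) ^ (s.card - B.card)
      = ∑ B ∈ s.powerset, (∏ _x ∈ B, θ) * ∏ _x ∈ s \ B, (1 - θ) := by
        refine Finset.sum_congr rfl fun B hB => ?_
        rw [Finset.prod_const, Finset.prod_const,
          Finset.card_sdiff_of_subset (Finset.mem_powerset.1 hB)]
    _ = ∏ _i ∈ s, (θ + (1 - θ)) := (Finset.prod_add _ _ s).symm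
    _ = 1 := by simp

lemma sum_wt (θ : ℝ) : ∑ A : Finset α, wt θ A = 1 := by
  have h := sum_pow_powerset θ (univ : Finset α)
  rw [Finset.powerset_univ, Finset.card_univ] at h
  simpa [wt] using h

lemma sum_ind_subset_wt (θ : ℝ) (S : Finset α) :
    ∑ A : Finset α, ind (S ⊆ A) * wt θ A = θ ^ S.card := by
  classical
  have h1 : ∑ A : Finset α, ind (S ⊆ A) * wt θ A
      = ∑ A ∈ univ.filter (fun A => S ⊆ A), wt θ A := by
    rw [Finset.sum_filter]
    refine Finset.sum_congr rfl fun A _ => ?_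
    by_cases h : S ⊆ A
    · rw [ind_true h, if_pos h, one_mul]
    · rw [ind_false h, if_neg h, zero_mul]
  have hd' : ∀ B : Finset α, B ⊆ Sᶜ → Disjoint S B := by
    intro B hB
    rw [Finset.disjoint_left]
    intro x hxS hxB
    exact (Finset.mem_compl.1 (hB hxB)) hxS
  have h2 : ∑ A ∈ univ.filter (fun A => S ⊆ A), wt θ A
      = ∑ B ∈ Sᶜ.powerset, wt θ (S ∪ B) := by
    refine Finset.sum_nbij' (fun A => A \ S) (fun B => S ∪ B) ?_ ?_ ?_ ?_ ?_
    · intro A hA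
      simp only [Finset.mem_filter, Finset.mem_univ, true_and] at hA
      simp only [Finset.mem_powerset]
      intro x hx
      simp only [Finset.mem_sdiff] at hx
      simp [Finset.mem_compl, hx.2]
    · intro B hB
      simp only [Finset.mem_filter, Finset.mem_univ, true_and]
      exact Finset.subset_union_left
    · intro A hA
      simp only [Finset.mem_filter, Finset.mem_univ, true_and] at hA
      exact Finset.union_sdiff_of_subset hA
    · intro B hB
      simp only [Finset.mem_powerset] at hB
      exact Finset.union_sdiff_cancel_left (hd' B hB)
    · intro A hA
      simp only [Finset.mem_filter, Finset.mem_univ, true_and] at hA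
      rw [Finset.union_sdiff_of_subset hA]
  rw [h1, h2]
  have h3 : ∀ B ∈ Sᶜ.powerset, wt θ (S ∪ B)
      = θ ^ S.card * (θ ^ B.card * (1 - θ) ^ (Sᶜ.card - B.card)) := by
    intro B hB
    simp only [Finset.mem_powerset] at hB
    have hcard : (S ∪ B).card = S.card + B.card :=
      Finset.card_union_of_disjoint (hd' B hB)
    have hSc : Sᶜ.card = Fintype.card α - S.card := Finset.card_compl S
    have hBle : B.card ≤ Sᶜ.card := Finset.card_le_card hB
    have hSle : S.card ≤ Fintype.card α := Finset.card_le_univ S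
    have hexp : Fintype.card α - (S.card + B.card) = Sᶜ.card - B.card := by omega
    unfold wt
    rw [hcard, pow_add, hexp, mul_assoc]
  rw [Finset.sum_congr rfl h3, ← Finset.mul_sum, sum_pow_powerset, mul_one]


variable {θ : ℝ}

lemma pr_nonneg (E : Finset α → Prop) (h0 : 0 ≤ θ) (h1 : θ ≤ 1) :
    0 ≤ ∑ A : Finset α, ind (E A) * wt θ A :=
  Finset.sum_nonneg fun A _ => mul_nonneg (ind_nonneg _) (wt_nonneg h0 h1 A)

lemma pr_le_one (E : Finset α → Prop) (h0 : 0 ≤ θ) (h1 : θ ≤ 1) :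
    ∑ A : Finset α, ind (E A) * wt θ A ≤ 1 := by
  calc ∑ A : Finset α, ind (E A) * wt θ A ≤ ∑ A : Finset α, wt θ A := by
        refine Finset.sum_le_sum fun A _ => ?_
        nlinarith [ind_nonneg (E A), ind_le_one (E A), wt_nonneg h0 h1 A]
    _ = 1 := sum_wt θ

lemma union_bound (𝓕 : Finset (Finset α)) (h0 : 0 ≤ θ) (h1 : θ ≤ 1) :
    ∑ A : Finset α, ind (∃ S ∈ 𝓕, S ⊆ A) * wt θ A ≤ ∑ S ∈ 𝓕, θ ^ S.card := by
  have key : ∀ A : Finset α, ind (∃ S ∈ 𝓕, S ⊆ A) * wt θ A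
      ≤ ∑ S ∈ 𝓕, ind (S ⊆ A) * wt θ A := by
    intro A
    by_cases h : ∃ S ∈ 𝓕, S ⊆ A
    · obtain ⟨S, hS, hSA⟩ := h
      rw [ind_true ⟨S, hS, hSA⟩, one_mul]
      calc wt θ A = ind (S ⊆ A) * wt θ A := by rw [ind_true hSA, one_mul]
        _ ≤ ∑ S ∈ 𝓕, ind (S ⊆ A) * wt θ A :=
          Finset.single_le_sum (f := fun T => ind (T ⊆ A) * wt θ A)
            (fun T _ => mul_nonneg (ind_nonneg _) (wt_nonneg h0 h1 A)) hS
    · rw [ind_false h, zero_mul]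
      exact Finset.sum_nonneg fun T _ => mul_nonneg (ind_nonneg _) (wt_nonneg h0 h1 A)
  calc ∑ A : Finset α, ind (∃ S ∈ 𝓕, S ⊆ A) * wt θ A
      ≤ ∑ A : Finset α, ∑ S ∈ 𝓕, ind (S ⊆ A) * wt θ A :=
        Finset.sum_le_sum fun A _ => key A
    _ = ∑ S ∈ 𝓕, ∑ A : Finset α, ind (S ⊆ A) * wt θ A := Finset.sum_comm
    _ = ∑ S ∈ 𝓕, θ ^ S.card := by
        exact Finset.sum_congr rfl fun S _ => sum_ind_subset_wt θ S

lemma first_moment (𝓕 : Finset (Finset α)) :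
    ∑ A : Finset α, wt θ A * (∑ S ∈ 𝓕, ind (S ⊆ A)) = ∑ S ∈ 𝓕, θ ^ S.card := by
  calc ∑ A : Finset α, wt θ A * (∑ S ∈ 𝓕, ind (S ⊆ A))
      = ∑ A : Finset α, ∑ S ∈ 𝓕, ind (S ⊆ A) * wt θ A := by
        refine Finset.sum_congr rfl fun A _ => ?_
        rw [Finset.mul_sum]
        exact Finset.sum_congr rfl fun S _ => mul_comm _ _
    _ = ∑ S ∈ 𝓕, ∑ A : Finset α, ind (S ⊆ A) * wt θ A := Finset.sum_comm
    _ = ∑ S ∈ 𝓕, θ ^ S.card :=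
        Finset.sum_congr rfl fun S _ => sum_ind_subset_wt θ S

lemma second_moment (𝓕 : Finset (Finset α)) :
    ∑ A : Finset α, wt θ A * (∑ S ∈ 𝓕, ind (S ⊆ A)) ^ 2
      = ∑ S ∈ 𝓕, ∑ T ∈ 𝓕, θ ^ (S ∪ T).card := by
  have expand : ∀ A : Finset α, wt θ A * (∑ S ∈ 𝓕, ind (S ⊆ A)) ^ 2
      = ∑ S ∈ 𝓕, ∑ T ∈ 𝓕, ind (S ∪ T ⊆ A) * wt θ A := by
    intro A
    rw [sq, Finset.sum_mul_sum, Finset.mul_sum]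
    refine Finset.sum_congr rfl fun S _ => ?_
    rw [Finset.mul_sum]
    refine Finset.sum_congr rfl fun T _ => ?_
    rw [ind_mul_ind, ← Finset.union_subset_iff]
    ring
  calc ∑ A : Finset α, wt θ A * (∑ S ∈ 𝓕, ind (S ⊆ A)) ^ 2
      = ∑ A : Finset α, ∑ S ∈ 𝓕, ∑ T ∈ 𝓕, ind (S ∪ T ⊆ A) * wt θ A :=
        Finset.sum_congr rfl fun A _ => expand A
    _ = ∑ S ∈ 𝓕, ∑ A : Finset α, ∑ T ∈ 𝓕, ind (S ∪ T ⊆ A) * wt θ A := Finset.sum_comm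
    _ = ∑ S ∈ 𝓕, ∑ T ∈ 𝓕, ∑ A : Finset α, ind (S ∪ T ⊆ A) * wt θ A :=
        Finset.sum_congr rfl fun S _ => Finset.sum_comm
    _ = ∑ S ∈ 𝓕, ∑ T ∈ 𝓕, θ ^ (S ∪ T).card :=
        Finset.sum_congr rfl fun S _ => Finset.sum_congr rfl fun T _ => by
          rw [sum_ind_subset_wt]

lemma cauchy_schwarz_pr (𝓕 : Finset (Finset α)) (h0 : 0 ≤ θ) (h1 : θ ≤ 1) :
    (∑ A : Finset α, wt θ A * (∑ S ∈ 𝓕, ind (S ⊆ A))) ^ 2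
      ≤ (∑ A : Finset α, wt θ A * (∑ S ∈ 𝓕, ind (S ⊆ A)) ^ 2)
        * ∑ A : Finset α, ind (∃ S ∈ 𝓕, S ⊆ A) * wt θ A := by
  have key := Finset.sum_mul_sq_le_sq_mul_sq Finset.univ
    (fun A : Finset α => Real.sqrt (wt θ A) * (∑ S ∈ 𝓕, ind (S ⊆ A)))
    (fun A : Finset α => Real.sqrt (wt θ A) * ind (∃ S ∈ 𝓕, S ⊆ A))
  have hw : ∀ A : Finset α, Real.sqrt (wt θ A) * Real.sqrt (wt θ A) = wt θ A :=
    fun A => Real.mul_self_sqrt (wt_nonneg h0 h1 A)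
  have hz : ∀ A : Finset α, (∑ S ∈ 𝓕, ind (S ⊆ A)) * ind (∃ S ∈ 𝓕, S ⊆ A)
      = ∑ S ∈ 𝓕, ind (S ⊆ A) := by
    intro A
    by_cases h : ∃ S ∈ 𝓕, S ⊆ A
    · rw [ind_true h, mul_one]
    · rw [ind_false h, mul_zero]
      refine (Finset.sum_eq_zero fun S hS => ?_).symm
      exact ind_false fun hSA => h ⟨S, hS, hSA⟩
  have e1 : ∀ A : Finset α,
      (Real.sqrt (wt θ A) * (∑ S ∈ 𝓕, ind (S ⊆ A)))
        * (Real.sqrt (wt θ A) * ind (∃ S ∈ 𝓕, S ⊆ A))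
      = wt θ A * (∑ S ∈ 𝓕, ind (S ⊆ A)) := by
    intro A
    calc (Real.sqrt (wt θ A) * (∑ S ∈ 𝓕, ind (S ⊆ A)))
        * (Real.sqrt (wt θ A) * ind (∃ S ∈ 𝓕, S ⊆ A))
        = (Real.sqrt (wt θ A) * Real.sqrt (wt θ A))
          * ((∑ S ∈ 𝓕, ind (S ⊆ A)) * ind (∃ S ∈ 𝓕, S ⊆ A)) := by ring
      _ = wt θ A * (∑ S ∈ 𝓕, ind (S ⊆ A)) := by rw [hw, hz]
  have e2 : ∀ A : Finset α,
      (Real.sqrt (wt θ A) * (∑ S ∈ 𝓕, ind (S ⊆ A))) ^ 2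
      = wt θ A * (∑ S ∈ 𝓕, ind (S ⊆ A)) ^ 2 := by
    intro A
    rw [mul_pow, sq, hw]
  have e3 : ∀ A : Finset α,
      (Real.sqrt (wt θ A) * ind (∃ S ∈ 𝓕, S ⊆ A)) ^ 2
      = ind (∃ S ∈ 𝓕, S ⊆ A) * wt θ A := by
    intro A
    rw [mul_pow, sq, hw]
    rw [sq]
    by_cases h : ∃ S ∈ 𝓕, S ⊆ A
    · rw [ind_true h]; ring
    · rw [ind_false h]; ring
  rw [Finset.sum_congr rfl fun A _ => e1 A, Finset.sum_congr rfl fun A _ => e2 A,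
    Finset.sum_congr rfl fun A _ => e3 A] at key
  exact key


lemma pair_count (𝓕 : Finset (Finset α)) (S : Finset α) (k : ℕ) :
    (𝓕.filter (fun T => (S ∩ T).card = k)).card
      ≤ ∑ U ∈ S.powersetCard k, (𝓕.filter (fun T => U ⊆ T)).card := by
  have hsub : 𝓕.filter (fun T => (S ∩ T).card = k)
      ⊆ (S.powersetCard k).biUnion (fun U => 𝓕.filter (fun T => U ⊆ T)) := by
    intro T hT
    simp only [Finset.mem_filter] at hT
    rw [Finset.mem_biUnion]
    refine ⟨S ∩ T, ?_, ?_⟩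
    · rw [Finset.mem_powersetCard]
      exact ⟨Finset.inter_subset_left, hT.2⟩
    · rw [Finset.mem_filter]
      exact ⟨hT.1, Finset.inter_subset_right⟩
  exact le_trans (Finset.card_le_card hsub) Finset.card_biUnion_le

lemma second_moment_bound (𝓕 : Finset (Finset α)) (ℓ : ℕ)
    (h𝓕 : ∀ S ∈ 𝓕, S.card = ℓ) (h0 : 0 ≤ θ) (h1 : θ ≤ 1) (g : ℕ → ℝ)
    (hg : ∀ k ∈ Finset.Icc 1 ℓ, ∀ U : Finset α, U.card = k →
      ((𝓕.filter (fun T => U ⊆ T)).card : ℝ) ≤ g k) :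
    ∑ S ∈ 𝓕, ∑ T ∈ 𝓕, θ ^ (S ∪ T).card
      ≤ (𝓕.card : ℝ) ^ 2 * θ ^ (2 * ℓ)
        + ∑ k ∈ Finset.Icc 1 ℓ, (ℓ.choose k : ℝ) * 𝓕.card * g k * θ ^ (2 * ℓ - k) := by
  classical
  have point : ∀ S ∈ 𝓕, ∀ T ∈ 𝓕, θ ^ (S ∪ T).card
      ≤ θ ^ (2 * ℓ) + ∑ k ∈ Finset.Icc 1 ℓ,
          (if (S ∩ T).card = k then θ ^ (2 * ℓ - k) else 0) := by
    intro S hS T hT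
    set k₀ := (S ∩ T).card with hk₀
    have hk₀ℓ : k₀ ≤ ℓ := by
      rw [← h𝓕 S hS]
      exact Finset.card_le_card Finset.inter_subset_left
    have hcard : (S ∪ T).card = 2 * ℓ - k₀ := by
      have := Finset.card_union_add_card_inter S T
      rw [h𝓕 S hS, h𝓕 T hT, ← hk₀] at this
      omega
    have hsum : ∑ k ∈ Finset.Icc 1 ℓ, (if k₀ = k then θ ^ (2 * ℓ - k) else 0)
        = if k₀ ∈ Finset.Icc 1 ℓ then θ ^ (2 * ℓ - k₀) else 0 :=
      Finset.sum_ite_eq (Finset.Icc 1 ℓ) k₀ (fun k => θ ^ (2 * ℓ - k))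
    rw [hsum, hcard]
    by_cases h : k₀ ∈ Finset.Icc 1 ℓ
    · rw [if_pos h]
      have : (0:ℝ) ≤ θ ^ (2 * ℓ) := pow_nonneg h0 _
      linarith
    · rw [if_neg h]
      have hk0 : k₀ = 0 := by
        simp only [Finset.mem_Icc] at h
        omega
      rw [hk0, Nat.sub_zero, add_zero]
  calc ∑ S ∈ 𝓕, ∑ T ∈ 𝓕, θ ^ (S ∪ T).card
      ≤ ∑ S ∈ 𝓕, ∑ T ∈ 𝓕, (θ ^ (2 * ℓ) + ∑ k ∈ Finset.Icc 1 ℓ,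
          (if (S ∩ T).card = k then θ ^ (2 * ℓ - k) else 0)) :=
        Finset.sum_le_sum fun S hS => Finset.sum_le_sum fun T hT => point S hS T hT
    _ = (𝓕.card : ℝ) ^ 2 * θ ^ (2 * ℓ) + ∑ k ∈ Finset.Icc 1 ℓ, ∑ S ∈ 𝓕,
          ((𝓕.filter (fun T => (S ∩ T).card = k)).card : ℝ) * θ ^ (2 * ℓ - k) := by
        rw [Finset.sum_congr rfl (fun S _ => Finset.sum_add_distrib)]
        rw [Finset.sum_add_distrib]
        congr 1
        · rw [Finset.sum_congr rfl (fun S (_ : S ∈ 𝓕) => Finset.sum_const ..), Finset.sum_const]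
          simp only [nsmul_eq_mul, sq]
          ring
        · rw [Finset.sum_congr rfl (fun S (_ : S ∈ 𝓕) => Finset.sum_comm)]
          rw [Finset.sum_comm]
          refine Finset.sum_congr rfl fun k _ => Finset.sum_congr rfl fun S _ => ?_
          rw [Finset.sum_ite, Finset.sum_const, Finset.sum_const_zero, add_zero, nsmul_eq_mul]
    _ ≤ (𝓕.card : ℝ) ^ 2 * θ ^ (2 * ℓ)
          + ∑ k ∈ Finset.Icc 1 ℓ, (ℓ.choose k : ℝ) * 𝓕.card * g k * θ ^ (2 * ℓ - k) := by
        apply add_le_add le_rfl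
        refine Finset.sum_le_sum fun k hk => ?_
        have hθp : (0:ℝ) ≤ θ ^ (2 * ℓ - k) := pow_nonneg h0 _
        have per : ∀ S ∈ 𝓕, ((𝓕.filter (fun T => (S ∩ T).card = k)).card : ℝ)
            ≤ (ℓ.choose k : ℝ) * g k := by
          intro S hS
          calc ((𝓕.filter (fun T => (S ∩ T).card = k)).card : ℝ)
              ≤ ((∑ U ∈ S.powersetCard k, (𝓕.filter (fun T => U ⊆ T)).card : ℕ) : ℝ) :=
                Nat.cast_le.2 (pair_count 𝓕 S k)
            _ = ∑ U ∈ S.powersetCard k, ((𝓕.filter (fun T => U ⊆ T)).card : ℝ) :=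
                Nat.cast_sum _ _
            _ ≤ ∑ U ∈ S.powersetCard k, g k := by
                refine Finset.sum_le_sum fun U hU => ?_
                exact hg k hk U (Finset.mem_powersetCard.1 hU).2
            _ = ((S.powersetCard k).card : ℝ) * g k := by
                rw [Finset.sum_const, nsmul_eq_mul]
            _ = (ℓ.choose k : ℝ) * g k := by
                rw [Finset.card_powersetCard, h𝓕 S hS]
        calc ∑ S ∈ 𝓕, ((𝓕.filter (fun T => (S ∩ T).card = k)).card : ℝ) * θ ^ (2 * ℓ - k)
            ≤ ∑ _S ∈ 𝓕, ((ℓ.choose k : ℝ) * g k) * θ ^ (2 * ℓ - k) :=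
              Finset.sum_le_sum fun S hS =>
                mul_le_mul_of_nonneg_right (per S hS) hθp
          _ = (ℓ.choose k : ℝ) * 𝓕.card * g k * θ ^ (2 * ℓ - k) := by
              rw [Finset.sum_const, nsmul_eq_mul]
              ring



lemma pr_eq (θ : ℝ) (E : Finset α → Prop) :
    prRandomSubset (Finset.univ : Finset α) θ E
      = ∑ A : Finset α, ind (E A) * wt θ A := by
  unfold prRandomSubset
  rw [Finset.powerset_univ]
  refine Finset.sum_congr rfl fun A _ => ?_
  rw [Finset.card_univ]
  by_cases h : E A
  · rw [if_pos h, ind_true h, one_mul]; rfl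
  · rw [if_neg h, ind_false h, zero_mul]

end Prob
lemma rpow_lb {x s δ : ℝ} (hδ0 : 0 < δ) (hδ1 : δ ≤ 1) (hx : δ ≤ x)
    (hs0 : 0 ≤ s) (hs1 : s ≤ 1) : δ ≤ x ^ s := by
  rcases le_total 1 x with h | h
  · exact hδ1.trans (Real.one_le_rpow h hs0)
  · calc δ ≤ x := hx
      _ = x ^ (1:ℝ) := (Real.rpow_one x).symm
      _ ≤ x ^ s := Real.rpow_le_rpow_of_exponent_ge (lt_of_lt_of_le hδ0 hx) h hs1

lemma tendsto_mul_atTop_helper {t th h : ℕ → ℝ} (ht : ∀ i, 0 < t i)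
    (hθ0 : ∀ i, 0 ≤ th i) (hh : ∀ i, 0 ≤ h i)
    (ho : t =o[atTop] th) {δ : ℝ} (hδ : 0 < δ)
    (hth : ∀ᶠ i in atTop, δ ≤ t i * h i) :
    Tendsto (fun i => th i * h i) atTop atTop := by
  rw [tendsto_atTop]
  intro K
  have hM : (0:ℝ) < max K 1 := lt_of_lt_of_le one_pos (le_max_right K 1)
  have hε : (0:ℝ) < δ / max K 1 := div_pos hδ hM
  filter_upwards [ho.def hε, hth] with i hi hδi
  rw [Real.norm_eq_abs, Real.norm_eq_abs, abs_of_pos (ht i),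
    abs_of_nonneg (hθ0 i)] at hi
  -- t i ≤ (δ / max K 1) * th i
  have h2 : δ ≤ (th i * h i) * (δ / max K 1) := by
    calc δ ≤ t i * h i := hδi
      _ ≤ ((δ / max K 1) * th i) * h i := mul_le_mul_of_nonneg_right hi (hh i)
      _ = (th i * h i) * (δ / max K 1) := by ring
  have h3 : δ / (δ / max K 1) ≤ th i * h i := (div_le_iff₀ hε).2 h2
  have h4 : δ / (δ / max K 1) = max K 1 := by
    field_simp
  calc K ≤ max K 1 := le_max_left K 1
    _ ≤ th i * h i := h4 ▸ h3

theorem stmt3 (n q : ℕ → ℕ) (F : ℕ → Type) [∀ i, Field (F i)] [∀ i, Fintype (F i)]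
    [∀ i, DecidableEq (F i)]
    (hq : ∀ i, Fintype.card (F i) = q i) (hqpp : ∀ i, IsPrimePow (q i))
    (hnq : Tendsto (fun i => n i + q i) atTop atTop)
    (ℓ : ℕ) (hℓ : 1 ≤ ℓ)
    (𝓕 : ∀ i, Finset (Finset (Fin (n i) → F i)))
    (h𝓕 : ∀ i, ∀ S ∈ 𝓕 i, S.card = ℓ)
    (b c : ℕ) (hb : 0 < b)
    (hΘ : (fun i => ((𝓕 i).card : ℝ)) =Θ[atTop]
      fun i => (q i : ℝ) ^ ((b * n i : ℤ) - (c : ℤ)))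
    (hcount : ∃ C : ℝ, 0 < C ∧ ∀ i, ∀ S : Finset (Fin (n i) → F i),
      (1 ≤ S.card → S.card ≤ b - 1 →
        (((𝓕 i).filter (fun T => S ⊆ T)).card : ℝ)
          ≤ C * (q i : ℝ) ^ (((b - S.card) * n i : ℤ) - (c : ℤ))) ∧
      (b ≤ S.card → (((𝓕 i).filter (fun T => S ⊆ T)).card : ℝ) ≤ C))
    (θ : ℕ → ℝ) (hθ : ∀ i, 0 ≤ θ i ∧ θ i ≤ 1) :
    (θ =o[atTop] (fun i => (q i : ℝ) ^ (((c : ℝ) - (b : ℝ) * (n i : ℝ)) / (ℓ : ℝ))) →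
      Tendsto (fun i => prRandomSubset (Finset.univ : Finset (Fin (n i) → F i)) (θ i)
        (fun A => ∃ S ∈ 𝓕 i, S ⊆ A)) atTop (nhds 0)) ∧
    ((fun i => (q i : ℝ) ^ (((c : ℝ) - (b : ℝ) * (n i : ℝ)) / (ℓ : ℝ))) =o[atTop] θ →
      Tendsto (fun i => prRandomSubset (Finset.univ : Finset (Fin (n i) → F i)) (θ i)
        (fun A => ∃ S ∈ 𝓕 i, S ⊆ A)) atTop (nhds 1)) := by
  classical
  obtain ⟨C, hC, hcnt⟩ := hcount
  have hq0 : ∀ i, (0:ℝ) < (q i : ℝ) := fun i => by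
    have := (hqpp i).two_le
    have : 0 < q i := by omega
    exact_mod_cast this
  have hqne : ∀ i, ((q i : ℝ)) ≠ 0 := fun i => ne_of_gt (hq0 i)
  have hℓR : (0:ℝ) < (ℓ:ℝ) := by exact_mod_cast hℓ
  set t : ℕ → ℝ := fun i => (q i : ℝ) ^ (((c:ℝ) - (b:ℝ) * (n i : ℝ)) / (ℓ:ℝ)) with ht
  have htpos : ∀ i, 0 < t i := fun i => Real.rpow_pos_of_pos (hq0 i) _
  have hPeq : ∀ i, prRandomSubset (Finset.univ : Finset (Fin (n i) → F i)) (θ i)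
      (fun A => ∃ S ∈ 𝓕 i, S ⊆ A)
      = ∑ A : Finset (Fin (n i) → F i), ind (∃ S ∈ 𝓕 i, S ⊆ A) * wt (θ i) A :=
    fun i => pr_eq (θ i) _
  have hsum_card : ∀ i, ∑ S ∈ 𝓕 i, (θ i) ^ S.card = ((𝓕 i).card : ℝ) * θ i ^ ℓ := by
    intro i
    rw [Finset.sum_congr rfl (fun S hS => by rw [h𝓕 i S hS]), Finset.sum_const,
      nsmul_eq_mul]
  have htℓ : ∀ i, t i ^ ℓ = (q i : ℝ) ^ ((c:ℤ) - (b * n i : ℤ)) := by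
    intro i
    rw [ht]
    rw [← Real.rpow_natCast ((q i : ℝ) ^ (((c:ℝ) - (b:ℝ) * (n i : ℝ)) / (ℓ:ℝ))) ℓ,
      ← Real.rpow_mul (hq0 i).le, div_mul_cancel₀ _ (ne_of_gt hℓR),
      show ((c:ℝ) - (b:ℝ) * (n i : ℝ)) = (((c:ℤ) - (b * n i : ℤ) : ℤ) : ℝ) by push_cast; ring,
      Real.rpow_intCast]
  -- constants from hΘ
  obtain ⟨c₂, hc₂ev⟩ := hΘ.1.bound
  obtain ⟨c₃, hc₃ev⟩ := hΘ.2.bound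
  set Q : ℕ → ℝ := fun i => (q i : ℝ) ^ ((b * n i : ℤ) - (c:ℤ)) with hQdef
  have hQpos : ∀ i, 0 < Q i := fun i => zpow_pos (hq0 i) _
  have ev2 : ∀ᶠ i in atTop, ((𝓕 i).card : ℝ) ≤ c₂ * Q i := by
    filter_upwards [hc₂ev] with i hi
    rwa [Real.norm_eq_abs, Real.norm_eq_abs, abs_of_nonneg (Nat.cast_nonneg _),
      abs_of_pos (hQpos i)] at hi
  have ev3 : ∀ᶠ i in atTop, Q i ≤ c₃ * ((𝓕 i).card : ℝ) := by
    filter_upwards [hc₃ev] with i hi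
    rwa [Real.norm_eq_abs, Real.norm_eq_abs, abs_of_pos (hQpos i),
      abs_of_nonneg (Nat.cast_nonneg _)] at hi
  have evcard : ∀ᶠ i in atTop, (1:ℝ) ≤ ((𝓕 i).card : ℝ) := by
    filter_upwards [ev3] with i hi
    have h0 : (0:ℝ) < c₃ * ((𝓕 i).card : ℝ) := lt_of_lt_of_le (hQpos i) hi
    have : ((𝓕 i).card : ℝ) ≠ 0 := by
      intro h; rw [h, mul_zero] at h0; exact lt_irrefl 0 h0
    have : (1:ℕ) ≤ (𝓕 i).card := Nat.one_le_iff_ne_zero.2 (by exact_mod_cast this)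
    exact_mod_cast this
  have hc₃pos : 0 < c₃ := by
    obtain ⟨i, h3, hc⟩ := (ev3.and evcard).exists
    nlinarith [hQpos i]
  have hc₂pos : 0 < c₂ := by
    obtain ⟨i, h2, hc⟩ := (ev2.and evcard).exists
    nlinarith [hQpos i]
  -- cardinality upper bound |𝓕 i| ≤ q^(n*ℓ)
  have hcard_le : ∀ i, ((𝓕 i).card : ℝ) ≤ (q i : ℝ) ^ ((ℓ * n i : ℕ) : ℤ) := by
    intro i
    have hsub : 𝓕 i ⊆ Finset.powersetCard ℓ (Finset.univ : Finset (Fin (n i) → F i)) := by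
      intro S hS
      rw [Finset.mem_powersetCard]
      exact ⟨Finset.subset_univ S, h𝓕 i S hS⟩
    have h1 : (𝓕 i).card ≤ (Fintype.card (Fin (n i) → F i)).choose ℓ := by
      have := Finset.card_le_card hsub
      rwa [Finset.card_powersetCard, Finset.card_univ] at this
    have hcf : Fintype.card (Fin (n i) → F i) = q i ^ n i := by
      rw [Fintype.card_fun, hq, Fintype.card_fin]
    have h2 : (𝓕 i).card ≤ (q i ^ n i) ^ ℓ :=
      le_trans h1 (by rw [hcf] at h1 ⊢; exact Nat.choose_le_pow _ _)
    calc ((𝓕 i).card : ℝ) ≤ (((q i ^ n i) ^ ℓ : ℕ) : ℝ) := Nat.cast_le.2 h2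
      _ = (q i : ℝ) ^ ((ℓ * n i : ℕ) : ℤ) := by
          rw [zpow_natCast]
          push_cast
          rw [← pow_mul, mul_comm (n i) ℓ]
  constructor
  · -- Part 1 : below threshold
    intro ho
    have h1 : (fun i => θ i ^ ℓ) =o[atTop] fun i => t i ^ ℓ := ho.pow (by omega)
    have hteq : (fun i => t i ^ ℓ) = fun i => (q i : ℝ) ^ ((c:ℤ) - (b * n i : ℤ)) :=
      funext htℓ
    rw [hteq] at h1
    have h3 := hΘ.1.mul_isLittleO h1
    have h4 : (fun i => Q i * (q i : ℝ) ^ ((c:ℤ) - (b * n i : ℤ))) = fun _ => (1:ℝ) := by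
      funext i
      rw [hQdef, ← zpow_add₀ (hqne i),
        show ((b * n i : ℤ) - (c:ℤ)) + ((c:ℤ) - (b * n i : ℤ)) = 0 by ring, zpow_zero]
    rw [hQdef] at h4
    rw [h4] at h3
    have T1 : Tendsto (fun i => ((𝓕 i).card : ℝ) * θ i ^ ℓ) atTop (nhds 0) :=
      (isLittleO_one_iff ℝ).1 h3
    refine squeeze_zero (fun i => ?_) (fun i => ?_) T1
    · rw [hPeq i]; exact pr_nonneg _ (hθ i).1 (hθ i).2
    · rw [hPeq i]
      calc ∑ A : Finset (Fin (n i) → F i), ind (∃ S ∈ 𝓕 i, S ⊆ A) * wt (θ i) A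
          ≤ ∑ S ∈ 𝓕 i, θ i ^ S.card := union_bound _ (hθ i).1 (hθ i).2
        _ = ((𝓕 i).card : ℝ) * θ i ^ ℓ := hsum_card i
  · -- Part 2 : above threshold
    intro ho
    have evθ : ∀ᶠ i in atTop, 0 < θ i := by
      filter_upwards [ho.def one_pos] with i hi
      rw [Real.norm_eq_abs, Real.norm_eq_abs, abs_of_pos (htpos i),
        abs_of_nonneg (hθ i).1, one_mul] at hi
      exact lt_of_lt_of_le (htpos i) hi
    set M : ℕ → ℝ := fun i => ((𝓕 i).card : ℝ) * θ i ^ ℓ with hMdef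
    set g : ℕ → ℕ → ℝ := fun i k =>
      if k ≤ b - 1 then C * (q i : ℝ) ^ (((b:ℤ) - (k:ℤ)) * (n i : ℤ) - (c:ℤ)) else C
      with hgdef
    set R : ℕ → ℝ := fun i => ∑ k ∈ Finset.Icc 1 ℓ,
      (ℓ.choose k : ℝ) * ((𝓕 i).card : ℝ) * g i k * θ i ^ (2 * ℓ - k) with hRdef
    have hgpos : ∀ i k, 0 < g i k := by
      intro i k
      rw [hgdef]
      dsimp only
      split
      · exact mul_pos hC (zpow_pos (hq0 i) _)
      · exact hC
    have hRnn : ∀ i, 0 ≤ R i := by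
      intro i
      rw [hRdef]
      refine Finset.sum_nonneg fun k _ => ?_
      exact mul_nonneg (mul_nonneg (mul_nonneg (Nat.cast_nonneg _) (Nat.cast_nonneg _))
        (le_of_lt (hgpos i k))) (pow_nonneg (hθ i).1 _)
    have hMnn : ∀ i, 0 ≤ M i := by
      intro i; rw [hMdef]
      exact mul_nonneg (Nat.cast_nonneg _) (pow_nonneg (hθ i).1 _)
    -- the function-level bound on filtered counts
    have hgapp : ∀ i, ∀ k ∈ Finset.Icc 1 ℓ, ∀ U : Finset (Fin (n i) → F i), U.card = k →
        (((𝓕 i).filter (fun T => U ⊆ T)).card : ℝ) ≤ g i k := by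
      intro i k hk U hU
      rw [Finset.mem_Icc] at hk
      rw [hgdef]
      dsimp only
      by_cases hkb : k ≤ b - 1
      · rw [if_pos hkb]
        have h := (hcnt i U).1 (by omega) (by omega)
        rw [hU] at h
        exact h
      · rw [if_neg hkb]
        exact (hcnt i U).2 (by omega)
    -- key per-index inequality
    have hkey : ∀ i, M i ^ 2 ≤ (M i ^ 2 + R i) *
        prRandomSubset (Finset.univ : Finset (Fin (n i) → F i)) (θ i)
          (fun A => ∃ S ∈ 𝓕 i, S ⊆ A) := by
      intro i
      rw [hPeq i]
      have e1 : M i = ∑ A : Finset (Fin (n i) → F i),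
          wt (θ i) A * (∑ S ∈ 𝓕 i, ind (S ⊆ A)) := by
        rw [first_moment, hsum_card]
      have e2 : ∑ A : Finset (Fin (n i) → F i),
          wt (θ i) A * (∑ S ∈ 𝓕 i, ind (S ⊆ A)) ^ 2 ≤ M i ^ 2 + R i := by
        rw [second_moment]
        refine le_trans (second_moment_bound (𝓕 i) ℓ (h𝓕 i) (hθ i).1 (hθ i).2 (g i)
          (hgapp i)) (le_of_eq ?_)
        rw [hRdef]
        dsimp only
        congr 1
        rw [hMdef]
        dsimp only
        rw [mul_pow, ← pow_mul, mul_comm ℓ 2]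
      calc M i ^ 2 = (∑ A : Finset (Fin (n i) → F i),
            wt (θ i) A * (∑ S ∈ 𝓕 i, ind (S ⊆ A))) ^ 2 := by rw [← e1]
        _ ≤ (∑ A : Finset (Fin (n i) → F i),
              wt (θ i) A * (∑ S ∈ 𝓕 i, ind (S ⊆ A)) ^ 2)
            * ∑ A : Finset (Fin (n i) → F i), ind (∃ S ∈ 𝓕 i, S ⊆ A) * wt (θ i) A :=
          cauchy_schwarz_pr (𝓕 i) (hθ i).1 (hθ i).2
        _ ≤ (M i ^ 2 + R i)
            * ∑ A : Finset (Fin (n i) → F i), ind (∃ S ∈ 𝓕 i, S ⊆ A) * wt (θ i) A :=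
          mul_le_mul_of_nonneg_right e2 (pr_nonneg _ (hθ i).1 (hθ i).2)
    -- asymptotics : R / M² → 0
    have TR : Tendsto (fun i => R i / M i ^ 2) atTop (nhds 0) := by
      have hsplit : (fun i => R i / M i ^ 2)
          = fun i => ∑ k ∈ Finset.Icc 1 ℓ,
              ((ℓ.choose k : ℝ) * ((𝓕 i).card : ℝ) * g i k * θ i ^ (2 * ℓ - k))
                / M i ^ 2 := by
        funext i
        rw [hRdef]
        exact Finset.sum_div _ _ _
      rw [hsplit]
      have hterm : ∀ k ∈ Finset.Icc 1 ℓ, Tendsto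
          (fun i => ((ℓ.choose k : ℝ) * ((𝓕 i).card : ℝ) * g i k * θ i ^ (2 * ℓ - k))
            / M i ^ 2) atTop (nhds 0) := by
        intro k hk
        obtain ⟨hk1, hkℓ⟩ := Finset.mem_Icc.1 hk
        have hkR : (0:ℝ) < (k:ℝ) := by exact_mod_cast hk1
        have hGk : Tendsto (fun i => ((𝓕 i).card : ℝ) * θ i ^ k / g i k)
            atTop atTop := by
          by_cases hkb : k ≤ b - 1
          · -- case k ≤ b-1
            have hgval : ∀ j, g j k
                = C * (q j : ℝ) ^ (((b:ℤ) - (k:ℤ)) * (n j : ℤ) - (c:ℤ)) := by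
              intro j; rw [hgdef]; dsimp only; rw [if_pos hkb]
            have hW : Tendsto (fun i => θ i * (q i : ℝ) ^ (n i)) atTop atTop := by
              refine tendsto_mul_atTop_helper htpos (fun i => (hθ i).1)
                (fun i => pow_nonneg (hq0 i).le _) ho
                (δ := min (1/c₃) 1) (lt_min (by positivity) one_pos) ?_
              have hprod : ∀ i, t i * (q i : ℝ) ^ (n i)
                  = ((q i : ℝ) ^ ((ℓ * n i + c : ℤ) - (b * n i : ℤ))) ^ ((1:ℝ)/(ℓ:ℝ)) := by
                intro i
                rw [← Real.rpow_intCast (q i : ℝ) ((ℓ * n i + c : ℤ) - (b * n i : ℤ)),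
                  ← Real.rpow_mul (hq0 i).le, ht]
                dsimp only
                rw [← Real.rpow_natCast (q i : ℝ) (n i), ← Real.rpow_add (hq0 i)]
                congr 1
                push_cast
                field_simp
                ring
              have evA : ∀ᶠ i in atTop,
                  1/c₃ ≤ (q i : ℝ) ^ ((ℓ * n i + c : ℤ) - (b * n i : ℤ)) := by
                filter_upwards [ev3] with i h3
                have h4 : Q i ≤ c₃ * (q i : ℝ) ^ ((ℓ * n i : ℕ) : ℤ) :=
                  le_trans h3 (mul_le_mul_of_nonneg_left (hcard_le i) hc₃pos.le)
                have h5 : (q i : ℝ) ^ ((ℓ * n i : ℕ) : ℤ)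
                    = Q i * (q i : ℝ) ^ ((ℓ * n i + c : ℤ) - (b * n i : ℤ)) := by
                  rw [hQdef]
                  dsimp only
                  rw [← zpow_add₀ (hqne i)]
                  congr 1
                  push_cast
                  ring
                rw [h5] at h4
                have hQp := hQpos i
                have hxp : (0:ℝ) < (q i : ℝ) ^ ((ℓ * n i + c : ℤ) - (b * n i : ℤ)) :=
                  zpow_pos (hq0 i) _
                rw [div_le_iff₀ hc₃pos]
                nlinarith
              filter_upwards [evA] with i hA
              rw [hprod i]
              refine rpow_lb (lt_min (by positivity) one_pos) (min_le_right _ _)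
                (le_trans (min_le_left _ _) hA) (by positivity) ?_
              rw [div_le_one hℓR]
              exact_mod_cast hℓ
            have hWk : Tendsto (fun i => (θ i * (q i : ℝ) ^ (n i)) ^ k) atTop atTop :=
              (tendsto_pow_atTop (by omega)).comp hW
            refine tendsto_atTop_mono' atTop ?_
              (hWk.const_mul_atTop (show (0:ℝ) < 1/(c₃*C) by positivity))
            filter_upwards [ev3] with i h3
            rw [hgval i]
            have hθk : (0:ℝ) ≤ θ i ^ k := pow_nonneg (hθ i).1 _
            have hcard_lb : Q i / c₃ ≤ ((𝓕 i).card : ℝ) := by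
              rw [div_le_iff₀ hc₃pos]
              linarith [h3]
            have hqe : (0:ℝ) < (q i : ℝ) ^ (((b:ℤ) - (k:ℤ)) * (n i : ℤ) - (c:ℤ)) :=
              zpow_pos (hq0 i) _
            have hQq : Q i = (q i : ℝ) ^ (((b:ℤ) - (k:ℤ)) * (n i : ℤ) - (c:ℤ))
                * (q i : ℝ) ^ ((k * n i : ℕ) : ℤ) := by
              rw [hQdef]
              dsimp only
              rw [← zpow_add₀ (hqne i)]
              congr 1
              push_cast
              ring
            calc 1/(c₃*C) * (θ i * (q i : ℝ) ^ (n i)) ^ k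
                = (Q i / c₃) * θ i ^ k
                  / (C * (q i : ℝ) ^ (((b:ℤ) - (k:ℤ)) * (n i : ℤ) - (c:ℤ))) := by
                  rw [mul_pow, hQq,
                    show ((q i : ℝ) ^ (n i)) ^ k = (q i : ℝ) ^ ((k * n i : ℕ) : ℤ) by
                      rw [zpow_natCast, ← pow_mul, mul_comm (n i) k]]
                  field_simp
              _ ≤ ((𝓕 i).card : ℝ) * θ i ^ k
                  / (C * (q i : ℝ) ^ (((b:ℤ) - (k:ℤ)) * (n i : ℤ) - (c:ℤ))) :=
                  (div_le_div_iff_of_pos_right (mul_pos hC hqe)).2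
                    (mul_le_mul_of_nonneg_right hcard_lb hθk)
          · -- case k ≥ b
            have hgval : ∀ j, g j k = C := by
              intro j; rw [hgdef]; dsimp only; rw [if_neg hkb]
            have hV : Tendsto
                (fun i => θ i * (q i : ℝ) ^ (((b:ℝ) * (n i : ℝ) - (c:ℝ)) / (k:ℝ)))
                atTop atTop := by
              refine tendsto_mul_atTop_helper htpos (fun i => (hθ i).1)
                (fun i => (Real.rpow_pos_of_pos (hq0 i) _).le) ho
                (δ := min (1/c₂) 1) (lt_min (by positivity) one_pos) ?_
              have hprod : ∀ i, t i * (q i : ℝ) ^ (((b:ℝ) * (n i : ℝ) - (c:ℝ)) / (k:ℝ))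
                  = (Q i) ^ ((1:ℝ)/(k:ℝ) - (1:ℝ)/(ℓ:ℝ)) := by
                intro i
                rw [hQdef]
                dsimp only
                rw [← Real.rpow_intCast (q i : ℝ) ((b * n i : ℤ) - (c:ℤ)),
                  ← Real.rpow_mul (hq0 i).le, ht]
                dsimp only
                rw [← Real.rpow_add (hq0 i)]
                congr 1
                push_cast
                field_simp
                ring
              have evB : ∀ᶠ i in atTop, 1/c₂ ≤ Q i := by
                filter_upwards [ev2, evcard] with i h2 hc
                rw [div_le_iff₀ hc₂pos]
                nlinarith
              filter_upwards [evB] with i hB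
              rw [hprod i]
              refine rpow_lb (lt_min (by positivity) one_pos) (min_le_right _ _)
                (le_trans (min_le_left _ _) hB) ?_ ?_
              · have h1 : (1:ℝ)/(ℓ:ℝ) ≤ 1/(k:ℝ) :=
                  one_div_le_one_div_of_le hkR (by exact_mod_cast hkℓ)
                linarith
              · have h1k : (1:ℝ)/(k:ℝ) ≤ 1 := by
                  rw [div_le_one hkR]
                  exact_mod_cast hk1
                have h2 : (0:ℝ) < 1/(ℓ:ℝ) := by positivity
                linarith
            have hVk : Tendsto
                (fun i => (θ i * (q i : ℝ) ^ (((b:ℝ) * (n i : ℝ) - (c:ℝ)) / (k:ℝ))) ^ k)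
                atTop atTop :=
              (tendsto_pow_atTop (by omega)).comp hV
            refine tendsto_atTop_mono' atTop ?_
              (hVk.const_mul_atTop (show (0:ℝ) < 1/(c₃*C) by positivity))
            filter_upwards [ev3] with i h3
            rw [hgval i]
            have hθk : (0:ℝ) ≤ θ i ^ k := pow_nonneg (hθ i).1 _
            have hcard_lb : Q i / c₃ ≤ ((𝓕 i).card : ℝ) := by
              rw [div_le_iff₀ hc₃pos]
              linarith [h3]
            have hrpowk : ((q i : ℝ) ^ (((b:ℝ) * (n i : ℝ) - (c:ℝ)) / (k:ℝ))) ^ k = Q i := by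
              rw [← Real.rpow_natCast ((q i : ℝ) ^ (((b:ℝ) * (n i : ℝ) - (c:ℝ)) / (k:ℝ))) k,
                ← Real.rpow_mul (hq0 i).le, div_mul_cancel₀ _ (ne_of_gt hkR), hQdef]
              dsimp only
              rw [show (b:ℝ) * (n i : ℝ) - (c:ℝ) = (((b * n i : ℤ) - (c:ℤ) : ℤ) : ℝ) by
                push_cast; ring, Real.rpow_intCast]
            calc 1/(c₃*C) * (θ i * (q i : ℝ) ^ (((b:ℝ) * (n i : ℝ) - (c:ℝ)) / (k:ℝ))) ^ k
                = (Q i / c₃) * θ i ^ k / C := by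
                  rw [mul_pow, hrpowk]
                  field_simp
              _ ≤ ((𝓕 i).card : ℝ) * θ i ^ k / C :=
                  (div_le_div_iff_of_pos_right hC).2 (mul_le_mul_of_nonneg_right hcard_lb hθk)
        have hdiv := (tendsto_const_nhds (x := ((ℓ.choose k : ℝ))) (f := atTop)).div_atTop hGk
        refine Tendsto.congr' ?_ hdiv
        filter_upwards [evθ, evcard] with i hθi hci
        rw [hMdef]
        dsimp only
        have ha : (0:ℝ) < ((𝓕 i).card : ℝ) := lt_of_lt_of_le one_pos hci
        have hane : ((𝓕 i).card : ℝ) ≠ 0 := ne_of_gt ha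
        have hθne : θ i ≠ 0 := ne_of_gt hθi
        have hgne : g i k ≠ 0 := ne_of_gt (hgpos i k)
        have hpow : θ i ^ (2 * ℓ - k) * θ i ^ k = θ i ^ (2 * ℓ) := by
          rw [← pow_add]
          congr 1
          omega
        have hd1 : (0:ℝ) < ((𝓕 i).card : ℝ) * θ i ^ k := mul_pos ha (pow_pos hθi k)
        have hd2 : (0:ℝ) < ((𝓕 i).card : ℝ) ^ 2 * θ i ^ (2 * ℓ) :=
          mul_pos (pow_pos ha 2) (pow_pos hθi _)
        rw [mul_pow, ← pow_mul, mul_comm ℓ 2, div_div_eq_mul_div,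
          div_eq_div_iff hd1.ne' hd2.ne']
        linear_combination (-((ℓ.choose k : ℝ) * g i k * ((𝓕 i).card : ℝ)^2)) * hpow
      have hsum := tendsto_finset_sum (Finset.Icc 1 ℓ) hterm
      simpa using hsum
    -- conclusion
    have evM : ∀ᶠ i in atTop, 0 < M i := by
      filter_upwards [evθ, evcard] with i h1 h2
      rw [hMdef]; dsimp only
      have : (0:ℝ) < θ i ^ ℓ := pow_pos h1 ℓ
      nlinarith
    have TL : Tendsto (fun i => M i ^ 2 / (M i ^ 2 + R i)) atTop (nhds 1) := by
      have T0 : Tendsto (fun i => 1 / (1 + R i / M i ^ 2)) atTop (nhds 1) := by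
        have hden : Tendsto (fun i => 1 + R i / M i ^ 2) atTop (nhds 1) := by
          have := (tendsto_const_nhds (x := (1:ℝ)) (f := atTop)).add TR
          simpa using this
        have h := hden.inv₀ (by norm_num)
        rw [inv_one] at h
        exact h.congr fun i => (one_div _).symm
      refine Tendsto.congr' ?_ T0
      filter_upwards [evM] with i hMi
      have hM2 : (0:ℝ) < M i ^ 2 := pow_pos hMi 2
      rw [show (1:ℝ) + R i / M i ^ 2 = (M i ^ 2 + R i) / M i ^ 2 by
        rw [add_div, div_self (ne_of_gt hM2)], one_div_div]
    refine tendsto_of_tendsto_of_tendsto_of_le_of_le' TL tendsto_const_nhds ?_ ?_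
    · filter_upwards [evM] with i hMi
      have hMR : (0:ℝ) < M i ^ 2 + R i := by
        have := hRnn i; nlinarith
      exact (div_le_iff₀ hMR).2 (by rw [mul_comm]; exact hkey i)
    · refine Eventually.of_forall fun i => ?_
      rw [hPeq i]
      exact pr_le_one _ (hθ i).1 (hθ i).2
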